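/- Let G = (V, E) be a finite directed graph and let r be an element not in V. Then G has a proper 3-coloring (a function c : V → {1,2,3} with c(u) ≠ c(v) for every edge (u,v) ∈ E) if and only if there exist three pairs (E1, F1), (E2, F2), (E3, F3) of subsets of V ∪ {r} such that: (a) for every vertex v ∈ V there is some k ∈ {1,2,3} with {r, v} ∩ Ek = ∅ and {r, v} ∩ Fk ≠ ∅, and (b) for every edge (u, v) ∈ E and every k ∈ {1,2,3}, {r, u, v} ∩ Ek ≠ ∅ or {r, u, v} ∩ Fk = ∅. (This is the correctness of the reduction from 3-Coloring used to prove NP-hardness of consistency with a Rabin condition of three pairs, where {r,v} and {r,u,v} are the infinity sets induced by the sample words in the constructed transition system.) -/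

import Mathlib

/-- Correctness of the reduction from 3-Coloring used for the
NP-hardness of consistency with a Rabin condition of three pairs.  The ground
set `V ∪ {r}` is modelled by `Option V`, the fresh element `r` being `none`
and each vertex `v` being `some v`.  A finite directed graph `(V, E)` has a
proper 3-coloring iff there are three pairs `(E 1, F 1), (E 2, F 2), (E 3, F 3)`
of subsets of `V ∪ {r}` such that (a) for every vertex `v` there is `k` with
`{r, v} ∩ E k = ∅` and `{r, v} ∩ F k ≠ ∅`, and (b) for every edge `(u, v)` and
every `k`, `{r, u, v} ∩ E k ≠ ∅` or `{r, u, v} ∩ F k = ∅`. -/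
theorem threeColoring_iff_rabin {V : Type*} [Fintype V] (E : Set (V × V)) :
    (∃ c : V → Fin 3, ∀ e ∈ E, c e.1 ≠ c e.2) ↔
      ∃ EF : Fin 3 → Set (Option V) × Set (Option V),
        (∀ v : V, ∃ k : Fin 3,
          ({none, some v} : Set (Option V)) ∩ (EF k).1 = ∅ ∧
          (({none, some v} : Set (Option V)) ∩ (EF k).2).Nonempty) ∧
        (∀ e ∈ E, ∀ k : Fin 3,
          (({none, some e.1, some e.2} : Set (Option V)) ∩ (EF k).1).Nonempty ∨
          ({none, some e.1, some e.2} : Set (Option V)) ∩ (EF k).2 = ∅) := by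
  constructor
  · rintro ⟨c, hc⟩
    refine ⟨fun k => ({x | ∃ v, x = some v ∧ c v ≠ k}, {x | ∃ v, x = some v ∧ c v = k}),
      ?_, ?_⟩
    · intro v
      refine ⟨c v, ?_, ⟨some v, ?_⟩⟩
      · ext x
        simp only [Set.mem_inter_iff, Set.mem_insert_iff, Set.mem_singleton_iff,
          Set.mem_setOf_eq, Set.mem_empty_iff_false, iff_false, not_and]
        rintro (rfl | rfl) ⟨w, hw, hcw⟩
        · exact nomatch hw
        · cases hw; exact hcw rfl
      · simp
    · intro e he k
      by_cases h : ({none, some e.1, some e.2} : Set (Option V)) ∩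
          {x | ∃ v, x = some v ∧ c v = k} = ∅
      · exact Or.inr h
      · left
        rw [Set.eq_empty_iff_forall_notMem] at h
        push_neg at h
        obtain ⟨x, hx, v, rfl, hv⟩ := h
        simp only [Set.mem_insert_iff, Set.mem_singleton_iff] at hx
        rcases hx with h1 | h1 | h1
        · exact nomatch h1
        · cases h1
          exact ⟨some e.2, Or.inr (Or.inr rfl), e.2, rfl, fun h2 => hc e he (hv.trans h2.symm)⟩
        · cases h1
          exact ⟨some e.1, Or.inr (Or.inl rfl), e.1, rfl, fun h2 => hc e he (h2.trans hv.symm)⟩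
  · rintro ⟨EF, ha, hb⟩
    choose c hc1 hc2 using ha
    refine ⟨c, fun e he hceq => ?_⟩
    rcases hb e he (c e.1) with h | h
    · obtain ⟨x, hx1, hx2⟩ := h
      have h1 := hc1 e.1
      have h2 := hc2 e.1
      have h1' := hc1 e.2
      rw [← hceq] at h1'
      rw [Set.eq_empty_iff_forall_notMem] at h1 h1'
      simp only [Set.mem_insert_iff, Set.mem_singleton_iff, Set.mem_inter_iff] at hx1 h1 h1'
      rcases hx1 with rfl | rfl | rfl
      · exact h1 none ⟨Or.inl rfl, hx2⟩
      · exact h1 _ ⟨Or.inr rfl, hx2⟩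
      · exact h1' _ ⟨Or.inr rfl, hx2⟩
    · obtain ⟨x, hx1, hx2⟩ := hc2 e.1
      rw [Set.eq_empty_iff_forall_notMem] at h
      simp only [Set.mem_insert_iff, Set.mem_singleton_iff] at hx1
      rcases hx1 with rfl | rfl
      · exact h none ⟨Or.inl rfl, hx2⟩
      · exact h _ ⟨Or.inr (Or.inl rfl), hx2⟩
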